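/- arXiv:1503.01871 — 5 statements merged into one kernel-verified Lean document; each statement's English description precedes it below -/
import Mathlib

section
/- Assume (H1) and let x be a strong global solution of the dynamical system. Let z, w, v, p ∈ H with v ∈ Az, p ∈ N_C(z) and w = v + p + Dz. Then for almost every t ≥ 0 the following inequality holds (in ℝ ∪ {+∞}): 2⟨ẋ(t), x(t) − z⟩ + λ(t)(2η − 3λ(t))‖D x(t) − D z‖² ≤ 2λ(t)β(t)[ sup_{u ∈ C} φ_B(u, p/β(t)) − σ_C(p/β(t)) ] + 3λ(t)²β(t)²‖B x(t)‖² + 3λ(t)²‖Dz + v‖² + 2λ(t)⟨z − x(t), w⟩. -/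
set_option maxHeartbeats 1000000


open scoped RealInnerProductSpace Pointwise
open MeasureTheory Filter

variable {H : Type*} [NormedAddCommGroup H] [InnerProductSpace ℝ H]

/-- A set-valued operator `A : H ⇒ H` (given by its value map) is monotone. -/
def MonotoneOperator (A : H → Set H) : Prop :=
  ∀ ⦃x u y v : H⦄, u ∈ A x → v ∈ A y → (0:ℝ) ≤ ⟪x - y, u - v⟫

/-- `A` is maximally monotone: monotone and without proper monotone extension. -/
def MaximallyMonotone (A : H → Set H) : Prop :=
  MonotoneOperator A ∧ ∀ A' : H → Set H, MonotoneOperator A' → (∀ x, A x ⊆ A' x) → A' = A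

/-- `A` is `γ`-strongly monotone. -/
def StronglyMonotoneOperator (γ : ℝ) (A : H → Set H) : Prop :=
  ∀ ⦃x u y v : H⦄, u ∈ A x → v ∈ A y → γ * ‖x - y‖ ^ 2 ≤ ⟪x - y, u - v⟫

/-- A single-valued operator `T` is `γ`-cocoercive. -/
def Cocoercive (γ : ℝ) (T : H → H) : Prop :=
  ∀ x y : H, γ * ‖T x - T y‖ ^ 2 ≤ ⟪x - y, T x - T y⟫

/-- The normal cone of a set `C` at `z` (empty when `z ∉ C`). -/
def normalCone (C : Set H) (z : H) : Set H :=
  {u | z ∈ C ∧ ∀ y ∈ C, ⟪y - z, u⟫ ≤ (0:ℝ)}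

/-- The support function `σ_C`, with values in `ℝ ∪ {±∞}`. -/
noncomputable def supportFn (C : Set H) (u : H) : EReal :=
  ⨆ y ∈ C, ((⟪y, u⟫ : ℝ) : EReal)

/-- The Fitzpatrick function of a single-valued operator `B`. -/
noncomputable def fitzpatrick (B : H → H) (x u : H) : EReal :=
  ⨆ y : H, ((⟪x, B y⟫ + ⟪y, u⟫ - ⟪y, B y⟫ : ℝ) : EReal)

/-- Conversion of an extended real into `[0,∞]` (negative values go to `0`). -/
noncomputable def erealToENNReal (x : EReal) : ENNReal :=
  if x = ⊤ then ⊤ else ENNReal.ofReal x.toReal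

/-- Absolute continuity of `f` on `[0,b]`, via the `ε`-`η` definition. -/
def AbsolutelyContinuousOnIcc (f : ℝ → H) (b : ℝ) : Prop :=
  ∀ ε > (0:ℝ), ∃ η > (0:ℝ), ∀ (n : ℕ) (a c : Fin n → ℝ),
    (∀ k, 0 ≤ a k ∧ a k ≤ c k ∧ c k ≤ b) →
    (Pairwise fun i j => Disjoint (Set.Ioo (a i) (c i)) (Set.Ioo (a j) (c j))) →
    ∑ k, (c k - a k) < η → ∑ k, ‖f (c k) - f (a k)‖ < ε

/-- A strong global solution `x`, with derivative function `xd`, of the dynamical system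
`ẋ(t) + x(t) = J_{λ(t)A}(x(t) − λ(t)Dx(t) − λ(t)β(t)Bx(t))`, `x(0) = x₀`, where the
resolvent equation is expressed as the differential inclusion
`x(t) − λ(t)Dx(t) − λ(t)β(t)Bx(t) − (ẋ(t)+x(t)) ∈ λ(t) A(ẋ(t)+x(t))`. -/
def IsStrongGlobalSolution (A : H → Set H) (D B : H → H) (lam beta : ℝ → ℝ)
    (x₀ : H) (x xd : ℝ → H) : Prop :=
  (∀ b > (0:ℝ), AbsolutelyContinuousOnIcc x b) ∧ x 0 = x₀ ∧
  ∀ᵐ t ∂(volume.restrict (Set.Ici (0:ℝ))),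
    HasDerivAt x (xd t) t ∧
    x t - lam t • D (x t) - (lam t * beta t) • B (x t) - (xd t + x t)
      ∈ lam t • A (xd t + x t)

/-- The solution set `zer(A + D + N_C)`. -/
def zerSum (A : H → Set H) (D : H → H) (C : Set H) : Set H :=
  {z | ∃ v ∈ A z, ∃ p ∈ normalCone C z, v + D z + p = 0}

private lemma ereal_key {a c d r : ℝ} {X : EReal} (hc : 0 < c) (hr : (r : EReal) ≤ X)
    (h : a ≤ c * r + d) : (a : EReal) ≤ (c : EReal) * X + (d : EReal) := by
  induction X with
  | bot => exact absurd (le_bot_iff.mp hr) (EReal.coe_ne_bot r)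
  | coe s =>
      rw [← EReal.coe_mul, ← EReal.coe_add]
      have hrs : r ≤ s := EReal.coe_le_coe_iff.mp hr
      exact EReal.coe_le_coe_iff.mpr (by nlinarith)
  | top =>
      rw [EReal.coe_mul_top_of_pos hc, EReal.top_add_coe]
      exact le_top

/-- Lemma 1: the basic Lyapunov inequality along trajectories, in `ℝ ∪ {+∞}`. -/
theorem lemma_fej1 [CompleteSpace H]
    (A : H → Set H) (hA : MaximallyMonotone A)
    (η μ : ℝ) (hη : 0 < η) (hμ : 0 < μ)
    (D B : H → H) (hD : Cocoercive η D) (hB : Cocoercive μ B)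
    (hC : {q : H | B q = 0}.Nonempty)
    (lam beta : ℝ → ℝ)
    (hlam_pos : ∀ t : ℝ, 0 ≤ t → 0 < lam t) (hbeta_pos : ∀ t : ℝ, 0 ≤ t → 0 < beta t)
    (hH1 : ∀ b > (0:ℝ), ContinuousOn lam (Set.Icc 0 b) ∧ ContinuousOn beta (Set.Icc 0 b))
    (x₀ : H) (x xd : ℝ → H)
    (hsol : IsStrongGlobalSolution A D B lam beta x₀ x xd)
    (z w v p : H) (hv : v ∈ A z) (hp : p ∈ normalCone {q : H | B q = 0} z)
    (hw : w = v + p + D z) :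
    ∀ᵐ t ∂(volume.restrict (Set.Ici (0:ℝ))),
      ((2 * ⟪xd t, x t - z⟫ + lam t * (2 * η - 3 * lam t) * ‖D (x t) - D z‖ ^ 2 : ℝ) : EReal) ≤
        ((2 * lam t * beta t : ℝ) : EReal) *
          ((⨆ u ∈ {q : H | B q = 0}, fitzpatrick B u ((beta t)⁻¹ • p)) -
            supportFn {q : H | B q = 0} ((beta t)⁻¹ • p)) +
        ((3 * lam t ^ 2 * beta t ^ 2 * ‖B (x t)‖ ^ 2 + 3 * lam t ^ 2 * ‖D z + v‖ ^ 2 +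
            2 * lam t * ⟪z - x t, w⟫ : ℝ) : EReal) := by
  filter_upwards [hsol.2.2, ae_restrict_mem measurableSet_Ici] with t hsol_t ht
  obtain ⟨-, hmem⟩ := hsol_t
  have hl0 : 0 < lam t := hlam_pos t ht
  have hb0 : 0 < beta t := hbeta_pos t ht
  set l := lam t with hldef
  set b := beta t with hbdef
  set X := x t with hXdef
  set V := xd t with hVdef
  obtain ⟨a, ha, haeq⟩ := Set.mem_smul_set.mp hmem
  -- monotonicity of A
  have hmon : (0:ℝ) ≤ ⟪(V + X) - z, a - v⟫ := hA.1 ha hv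
  have h0 : (0:ℝ) ≤ ⟪(V + X) - z, l • a - l • v⟫ := by
    rw [← smul_sub, real_inner_smul_right]
    exact mul_nonneg hl0.le hmon
  rw [haeq] at h0
  have hvec : X - l • D X - (l * b) • B X - (V + X) - l • v
      = -(V + l • (D X - D z) + (l * b) • B X + l • (D z + v)) := by module
  have hvec2 : (V + X) - z = V + (X - z) := by abel
  rw [hvec2, hvec] at h0
  have hS : ‖V‖^2 + ⟪X - z, V⟫ + l * (⟪V, D X - D z⟫ + ⟪X - z, D X - D z⟫)
      + l * b * (⟪V, B X⟫ + ⟪X - z, B X⟫)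
      + l * (⟪V, D z + v⟫ + ⟪X - z, D z + v⟫) ≤ 0 := by
    have hexp : ⟪V + (X - z), -(V + l • (D X - D z) + (l * b) • B X + l • (D z + v))⟫
        = -(‖V‖^2 + ⟪X - z, V⟫ + l * (⟪V, D X - D z⟫ + ⟪X - z, D X - D z⟫)
            + l * b * (⟪V, B X⟫ + ⟪X - z, B X⟫)
            + l * (⟪V, D z + v⟫ + ⟪X - z, D z + v⟫)) := by
      simp only [inner_add_left, inner_add_right, inner_neg_right, real_inner_smul_right,
        real_inner_self_eq_norm_sq]
      ring
    rw [hexp] at h0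
    linarith
  -- basic bounds
  have hcoco : l * (η * ‖D X - D z‖^2) ≤ l * ⟪X - z, D X - D z⟫ :=
    mul_le_mul_of_nonneg_left (hD X z) hl0.le
  have hA1 : -(l * (‖V‖ * ‖D X - D z‖)) ≤ l * ⟪V, D X - D z⟫ := by
    have h1 : -(‖V‖ * ‖D X - D z‖) ≤ ⟪V, D X - D z⟫ :=
      neg_le_of_abs_le (abs_real_inner_le_norm _ _)
    nlinarith [mul_le_mul_of_nonneg_left h1 hl0.le]
  have hA3 : -((l * b) * (‖V‖ * ‖B X‖)) ≤ (l * b) * ⟪V, B X⟫ := by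
    have h1 : -(‖V‖ * ‖B X‖) ≤ ⟪V, B X⟫ :=
      neg_le_of_abs_le (abs_real_inner_le_norm _ _)
    nlinarith [mul_le_mul_of_nonneg_left h1 (mul_nonneg hl0.le hb0.le)]
  have hA4 : -(l * (‖V‖ * ‖D z + v‖)) ≤ l * ⟪V, D z + v⟫ := by
    have h1 : -(‖V‖ * ‖D z + v‖) ≤ ⟪V, D z + v⟫ :=
      neg_le_of_abs_le (abs_real_inner_le_norm _ _)
    nlinarith [mul_le_mul_of_nonneg_left h1 hl0.le]
  have hy1 : 2 * (l * (‖V‖ * ‖D X - D z‖)) ≤ ‖V‖^2/3 + 3 * l^2 * ‖D X - D z‖^2 := by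
    nlinarith [sq_nonneg (‖V‖ - 3 * (l * ‖D X - D z‖))]
  have hy2 : 2 * ((l * b) * (‖V‖ * ‖B X‖)) ≤ ‖V‖^2/3 + 3 * (l^2 * b^2) * ‖B X‖^2 := by
    nlinarith [sq_nonneg (‖V‖ - 3 * ((l * b) * ‖B X‖))]
  have hy3 : 2 * (l * (‖V‖ * ‖D z + v‖)) ≤ ‖V‖^2/3 + 3 * l^2 * ‖D z + v‖^2 := by
    nlinarith [sq_nonneg (‖V‖ - 3 * (l * ‖D z + v‖))]
  have hcomm : ⟪X - z, V⟫ = ⟪V, X - z⟫ := real_inner_comm _ _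
  -- the key real inequality
  set R' : ℝ := ⟪z, B X⟫ - ⟪X, B X⟫ + b⁻¹ * ⟪X - z, p⟫ with hR'def
  have hwz : ⟪z - X, w⟫ = -(⟪X - z, D z + v⟫ + ⟪X - z, p⟫) := by
    rw [hw]
    have : z - X = -(X - z) := by abel
    rw [this, inner_neg_left]
    simp only [inner_add_right]
    ring
  have hbb : b * b⁻¹ = 1 := mul_inv_cancel₀ hb0.ne'
  have hzBX : ⟪z, B X⟫ - ⟪X, B X⟫ = -⟪X - z, B X⟫ := by
    rw [inner_sub_left]; ring
  have hKEY : 2 * ⟪V, X - z⟫ + l * (2 * η - 3 * l) * ‖D X - D z‖ ^ 2 ≤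
      (2 * l * b) * R' + (3 * l ^ 2 * b ^ 2 * ‖B X‖ ^ 2 + 3 * l ^ 2 * ‖D z + v‖ ^ 2
        + 2 * l * ⟪z - X, w⟫) := by
    have hexpand : (2 * l * b) * R' = -(2 * (l * b) * ⟪X - z, B X⟫) + 2 * l * ⟪X - z, p⟫ := by
      rw [hR'def, hzBX]
      linear_combination 2 * l * ⟪X - z, p⟫ * hbb
    rw [hexpand, hwz]
    nlinarith [hS, hcoco, hA1, hA3, hA4, hy1, hy2, hy3, hcomm, sq_nonneg ‖V‖]
  -- Fitzpatrick / support function bounds in EReal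
  have hzC : z ∈ {q : H | B q = 0} := hp.1
  set P : H := b⁻¹ • p with hPdef
  have hσ : supportFn {q : H | B q = 0} P = ((⟪z, P⟫ : ℝ) : EReal) := by
    apply le_antisymm
    · apply iSup₂_le
      intro y hy
      apply EReal.coe_le_coe_iff.mpr
      have h1 : ⟪y - z, p⟫ ≤ 0 := hp.2 y hy
      have h2 : ⟪y, p⟫ - ⟪z, p⟫ = ⟪y - z, p⟫ := (inner_sub_left _ _ _).symm
      rw [hPdef, real_inner_smul_right, real_inner_smul_right]
      nlinarith [inv_pos.mpr hb0]
    · exact le_iSup₂_of_le z hzC le_rfl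
  have hfitz : ((⟪z, B X⟫ + ⟪X, P⟫ - ⟪X, B X⟫ : ℝ) : EReal)
      ≤ ⨆ u ∈ {q : H | B q = 0}, fitzpatrick B u P :=
    le_trans (le_iSup (fun y => ((⟪z, B y⟫ + ⟪y, P⟫ - ⟪y, B y⟫ : ℝ) : EReal)) X)
      (le_iSup₂_of_le z hzC le_rfl)
  have hSsub : ((R' : ℝ) : EReal) ≤
      (⨆ u ∈ {q : H | B q = 0}, fitzpatrick B u P) - supportFn {q : H | B q = 0} P := by
    rw [hσ]
    refine le_trans ?_ (EReal.sub_le_sub hfitz (le_refl ((⟪z, P⟫ : ℝ) : EReal)))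
    rw [← EReal.coe_sub]
    apply EReal.coe_le_coe_iff.mpr
    apply le_of_eq
    rw [hR'def, hPdef, real_inner_smul_right X p, real_inner_smul_right z p,
      inner_sub_left]
    ring
  exact ereal_key (by positivity) hSsub hKEY
end

section
/- Assume (H1) and let x be a strong global solution of the dynamical system. Let z ∈ C and v ∈ Az. Then for every ε ≥ 0 and almost every t ≥ 0: 2⟨ẋ(t), x(t) − z⟩ + ((1+2ε)/(1+ε))‖ẋ(t)‖² + (2ε/(1+ε)) λ(t)β(t) ⟨x(t) − z, B x(t)⟩ ≤ λ(t)β(t) ( (1+ε)λ(t)β(t) − 2μ/(1+ε) ) ‖B x(t)‖² + 2λ(t) ⟨z − ẋ(t) − x(t), D x(t) + v⟩. -/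
open scoped RealInnerProductSpace Pointwise
open MeasureTheory Filter

variable {H : Type*} [NormedAddCommGroup H] [InnerProductSpace ℝ H]

private lemma aux_arith (ε L bt μ na nb I1 I2 I3 J : ℝ) (hε : 0 ≤ ε) (hL : 0 < L) (hbt : 0 < bt)
    (key1 : na + I1 + (L*bt)*I2 + (L*bt)*I3 ≤ L*J)
    (hco : μ*nb ≤ I3)
    (h3 : 0 ≤ na + 2*((1+ε)*(L*bt))*I2 + ((1+ε)*(L*bt))^2*nb) :
    2*I1 + ((1+2*ε)/(1+ε))*na + (2*ε/(1+ε))*L*bt*I3 ≤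
      L*bt*((1+ε)*L*bt - 2*μ/(1+ε))*nb + 2*L*J := by
  have hs : (0:ℝ) < 1 + ε := by linarith
  refine le_of_mul_le_mul_left ?_ hs
  have h1 : (1+ε) * (((1+2*ε)/(1+ε))*na) = (1+2*ε)*na := by
    field_simp
  have h2 : (1+ε) * ((2*ε/(1+ε))*L*bt*I3) = 2*ε*L*bt*I3 := by
    field_simp
  have h4 : (1+ε) * (L*bt*((1+ε)*L*bt - 2*μ/(1+ε))*nb) =
      (1+ε)^2*(L*bt)^2*nb - 2*μ*L*bt*nb := by
    field_simp
  have s1 : 2*(1+ε)*(na + I1 + (L*bt)*I2 + (L*bt)*I3) ≤ 2*(1+ε)*(L*J) :=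
    mul_le_mul_of_nonneg_left key1 (by linarith)
  have s2 : 2*(L*bt)*(μ*nb) ≤ 2*(L*bt)*I3 :=
    mul_le_mul_of_nonneg_left hco (by nlinarith)
  nlinarith [s1, s2, h3, h1, h2, h4]

private lemma aux_young (c : ℝ) (a b : H) :
    0 ≤ ‖a‖^2 + 2*c*⟪a,b⟫ + c^2*‖b‖^2 := by
  have h := real_inner_self_nonneg (x := a + c • b)
  have hexp : ⟪a + c • b, a + c • b⟫ = ‖a‖^2 + 2*c*⟪a,b⟫ + c^2*‖b‖^2 := by
    rw [inner_add_left, inner_add_right, inner_add_right]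
    simp [inner_add_left, inner_add_right, real_inner_smul_left, real_inner_smul_right,
      real_inner_self_eq_norm_sq, real_inner_comm b a, norm_smul, mul_pow, sq_abs]
    ring
  linarith [hexp ▸ h]

private lemma aux_mono {A : H → Set H} (hA : ∀ ⦃x u y v : H⦄, u ∈ A x → v ∈ A y → (0:ℝ) ≤ ⟪x - y, u - v⟫)
    (L K : ℝ) (hL : 0 < L) (a p z b d v w : H) (hw : w ∈ A (a + p)) (hv : v ∈ A z)
    (hwu : L • w = p - L • d - K • b - (a + p)) :
    ‖a‖^2 + ⟪a, p - z⟫ + K*⟪a,b⟫ + K*⟪p - z, b⟫ ≤ L*⟪z - a - p, d + v⟫ := by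
  have hmono : (0:ℝ) ≤ ⟪(a + p) - z, w - v⟫ := hA hw hv
  have h0 : (0:ℝ) ≤ ⟪(a+p)-z, L • (w - v)⟫ := by
    rw [real_inner_smul_right]; exact mul_nonneg hL.le hmono
  have e1 : L • (w - v) = -a - L • (d + v) - K • b := by
    rw [smul_sub, hwu]; module
  rw [e1] at h0
  have hexp : ⟪(a+p)-z, -a - L•(d+v) - K•b⟫ =
      -(‖a‖^2 + ⟪a, p-z⟫ + K*⟪a,b⟫ + K*⟪p-z,b⟫) - L*⟪a+(p-z), d+v⟫ := by
    have h2 : (a+p)-z = a + (p - z) := by abel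
    rw [h2]
    simp [inner_add_left, inner_add_right, inner_sub_right, inner_neg_right, real_inner_smul_right,
      real_inner_self_eq_norm_sq, real_inner_comm (p - z) a, real_inner_comm (p-z) b]
    ring
  have hJ : ⟪z - a - p, d + v⟫ = -⟪a + (p - z), d + v⟫ := by
    have h2 : z - a - p = -(a + (p - z)) := by abel
    rw [h2, inner_neg_left]
  rw [hexp] at h0
  rw [hJ]
  linarith


/-- Lemma 2: a Lyapunov inequality with free parameter `ε ≥ 0`. -/
theorem lemma_fej2 [CompleteSpace H]
    (A : H → Set H) (hA : MaximallyMonotone A)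
    (η μ : ℝ) (hη : 0 < η) (hμ : 0 < μ)
    (D B : H → H) (hD : Cocoercive η D) (hB : Cocoercive μ B)
    (hC : {q : H | B q = 0}.Nonempty)
    (lam beta : ℝ → ℝ)
    (hlam_pos : ∀ t : ℝ, 0 ≤ t → 0 < lam t) (hbeta_pos : ∀ t : ℝ, 0 ≤ t → 0 < beta t)
    (hH1 : ∀ b > (0:ℝ), ContinuousOn lam (Set.Icc 0 b) ∧ ContinuousOn beta (Set.Icc 0 b))
    (x₀ : H) (x xd : ℝ → H)
    (hsol : IsStrongGlobalSolution A D B lam beta x₀ x xd)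
    (z v : H) (hz : z ∈ {q : H | B q = 0}) (hv : v ∈ A z) :
    ∀ ε : ℝ, 0 ≤ ε →
      ∀ᵐ t ∂(volume.restrict (Set.Ici (0:ℝ))),
        2 * ⟪xd t, x t - z⟫ + ((1 + 2 * ε) / (1 + ε)) * ‖xd t‖ ^ 2 +
            (2 * ε / (1 + ε)) * lam t * beta t * ⟪x t - z, B (x t)⟫ ≤
          lam t * beta t * ((1 + ε) * lam t * beta t - 2 * μ / (1 + ε)) * ‖B (x t)‖ ^ 2 +
            2 * lam t * ⟪z - xd t - x t, D (x t) + v⟫ := by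
  intro ε hε
  simp only [Set.mem_setOf_eq] at hz
  filter_upwards [hsol.2.2, ae_restrict_mem measurableSet_Ici] with t ht h0t
  obtain ⟨-, hmem⟩ := ht
  have hL : 0 < lam t := hlam_pos t h0t
  have hbt : 0 < beta t := hbeta_pos t h0t
  obtain ⟨w, hw, hwu⟩ := hmem
  have key1 : ‖xd t‖^2 + ⟪xd t, x t - z⟫ + (lam t * beta t)*⟪xd t, B (x t)⟫
      + (lam t * beta t)*⟪x t - z, B (x t)⟫ ≤ lam t * ⟪z - xd t - x t, D (x t) + v⟫ :=
    aux_mono hA.1 (lam t) (lam t * beta t) hL (xd t) (x t) z (B (x t)) (D (x t)) v w hw hv hwu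
  have hco : μ * ‖B (x t)‖^2 ≤ ⟪x t - z, B (x t)⟫ := by
    have h := hB (x t) z
    rw [hz, sub_zero] at h
    exact h
  have h3 := aux_young ((1+ε)*(lam t * beta t)) (xd t) (B (x t))
  have := aux_arith ε (lam t) (beta t) μ (‖xd t‖^2) (‖B (x t)‖^2)
    (⟪xd t, x t - z⟫) (⟪xd t, B (x t)⟫) (⟪x t - z, B (x t)⟫)
    (⟪z - xd t - x t, D (x t) + v⟫) hε hL hbt key1 hco h3
  linarith
end

section
/- Assume (H1), let x be a strong global solution of the dynamical system, and suppose limsup_{t→∞} λ(t)β(t) < 2μ. Let z ∈ C and v ∈ Az. Then there exist a, b > 0 and t₀ > 0 such that for almost every t ≥ t₀: 2⟨ẋ(t), x(t) − z⟩ + a( ‖ẋ(t)‖² + λ(t)β(t)⟨x(t) − z, B x(t)⟩ + λ(t)β(t)‖B x(t)‖² ) ≤ ( bλ(t)² − 2ηλ(t) ) ‖D x(t) − D z‖² + 2λ(t)⟨z − x(t), v + Dz⟩ + bλ(t)²‖Dz + v‖². -/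
open scoped RealInnerProductSpace Pointwise
open MeasureTheory Filter

variable {H : Type*} [NormedAddCommGroup H] [InnerProductSpace ℝ H]

lemma real_key_fej (L LB a cr η μ p n1 n2 n3 r1 r2 r3 ps s1 s2 s3 : ℝ)
    (hp : 0 ≤ p) (hn3 : 0 ≤ n3)
    (hL : 0 ≤ L) (hLB0 : 0 ≤ LB) (hLBc : LB ≤ cr)
    (ha0 : 0 < a) (ha2 : a ≤ 1/2) (ha3 : a + cr ≤ (2 - a) * μ)
    (hmono : 0 ≤ -p - L*r1 - L*r2 - LB*r3 - ps - L*s1 - L*s2 - LB*s3)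
    (h1 : 0 ≤ (1/4)*p + 2*L*r1 + 4*L^2*n1)
    (h2 : 0 ≤ (1/4)*p + 2*L*r2 + 4*L^2*n2)
    (h3 : 0 ≤ p + 2*LB*r3 + LB^2*n3)
    (hcoD : η*n1 ≤ s1) (hcoB : μ*n3 ≤ s3) :
    2*ps + a*(p + LB*s3 + LB*n3) ≤ (4*L^2 - 2*η*L)*n1 + 2*L*(-s2) + 4*L^2*n2 := by
  have hD' : 2*(L*(η*n1)) ≤ 2*(L*s1) := by
    have := mul_le_mul_of_nonneg_left hcoD hL
    linarith
  have hfac : a*s3 + a*n3 + LB*n3 - 2*s3 ≤ 0 := by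
    have h4 : LB*n3 ≤ cr*n3 := mul_le_mul_of_nonneg_right hLBc hn3
    nlinarith [mul_le_mul_of_nonneg_left hcoB (by linarith : (0:ℝ) ≤ 2 - a)]
  have hq3 : LB*(a*s3 + a*n3 + LB*n3 - 2*s3) ≤ 0 := mul_nonpos_of_nonneg_of_nonpos hLB0 hfac
  have hP : (a - 1/2)*p ≤ 0 := mul_nonpos_of_nonpos_of_nonneg (by linarith) hp
  nlinarith [hmono, h1, h2, h3, hD', hq3, hP]

lemma young_quarter (P q : H) (c : ℝ) :
    (0:ℝ) ≤ (1/4)*‖P‖^2 + 2*c*⟪P,q⟫ + 4*c^2*‖q‖^2 := by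
  have h : (0:ℝ) ≤ ‖(1/2:ℝ)•P + (2*c)•q‖^2 := by positivity
  rw [norm_add_sq_real, norm_smul, norm_smul, real_inner_smul_left, real_inner_smul_right] at h
  simp only [Real.norm_eq_abs, mul_pow, sq_abs] at h
  nlinarith [h]

lemma young_one (P q : H) (c : ℝ) :
    (0:ℝ) ≤ ‖P‖^2 + 2*c*⟪P,q⟫ + c^2*‖q‖^2 := by
  have h : (0:ℝ) ≤ ‖P + c•q‖^2 := by positivity
  rw [norm_add_sq_real, norm_smul, real_inner_smul_right] at h
  simp only [Real.norm_eq_abs, mul_pow, sq_abs] at h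
  nlinarith [h]

lemma inner_expand_fej (P s q1 q2 q3 : H) (L LB : ℝ)
    (hmono : (0:ℝ) ≤ ⟪P + s, -P - L•q1 - L•q2 - LB•q3⟫) :
    (0:ℝ) ≤ -‖P‖^2 - L*⟪P,q1⟫ - L*⟪P,q2⟫ - LB*⟪P,q3⟫ - ⟪P,s⟫
        - L*⟪s,q1⟫ - L*⟪s,q2⟫ - LB*⟪s,q3⟫ := by
  have e : ⟪P + s, -P - L•q1 - L•q2 - LB•q3⟫
      = -‖P‖^2 - L*⟪P,q1⟫ - L*⟪P,q2⟫ - LB*⟪P,q3⟫ - ⟪P,s⟫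
        - L*⟪s,q1⟫ - L*⟪s,q2⟫ - LB*⟪s,q3⟫ := by
    simp [inner_add_left, inner_sub_right, inner_neg_right, real_inner_smul_right,
      real_inner_self_eq_norm_sq, real_inner_comm s P]
    ring
  linarith [e ▸ hmono]

/-- Lemma 3: under `limsup_{t→∞} λ(t)β(t) < 2μ` there are `a, b > 0` and `t₀ > 0`
such that the stated Lyapunov inequality holds for almost every `t ≥ t₀`. -/
theorem lemma_fej3 [CompleteSpace H]
    (A : H → Set H) (hA : MaximallyMonotone A)
    (η μ : ℝ) (hη : 0 < η) (hμ : 0 < μ)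
    (D B : H → H) (hD : Cocoercive η D) (hB : Cocoercive μ B)
    (hC : {q : H | B q = 0}.Nonempty)
    (lam beta : ℝ → ℝ)
    (hlam_pos : ∀ t : ℝ, 0 ≤ t → 0 < lam t) (hbeta_pos : ∀ t : ℝ, 0 ≤ t → 0 < beta t)
    (hH1 : ∀ b > (0:ℝ), ContinuousOn lam (Set.Icc 0 b) ∧ ContinuousOn beta (Set.Icc 0 b))
    (hls : limsup (fun t => ((lam t * beta t : ℝ) : EReal)) atTop < ((2 * μ : ℝ) : EReal))
    (x₀ : H) (x xd : ℝ → H)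
    (hsol : IsStrongGlobalSolution A D B lam beta x₀ x xd)
    (z v : H) (hz : z ∈ {q : H | B q = 0}) (hv : v ∈ A z) :
    ∃ a > (0:ℝ), ∃ b > (0:ℝ), ∃ t₀ > (0:ℝ),
      ∀ᵐ t ∂(volume.restrict (Set.Ici t₀)),
        2 * ⟪xd t, x t - z⟫ +
            a * (‖xd t‖ ^ 2 + lam t * beta t * ⟪x t - z, B (x t)⟫ +
              lam t * beta t * ‖B (x t)‖ ^ 2) ≤
          (b * lam t ^ 2 - 2 * η * lam t) * ‖D (x t) - D z‖ ^ 2 +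
            2 * lam t * ⟪z - x t, v + D z⟫ + b * lam t ^ 2 * ‖D z + v‖ ^ 2 := by
  obtain ⟨c, hc1, hc2⟩ := exists_between hls
  have hcbot : c ≠ ⊥ := (bot_le.trans_lt hc1).ne'
  have hctop : c ≠ ⊤ := (hc2.trans_le le_top).ne
  set cr := c.toReal with hcr_def
  have hc : c = (cr : EReal) := (EReal.coe_toReal hctop hcbot).symm
  have hcr2 : cr < 2 * μ := by
    rw [hc] at hc2; exact_mod_cast hc2
  have hev : ∀ᶠ t in atTop, lam t * beta t < cr := by
    filter_upwards [eventually_lt_of_limsup_lt hc1] with t ht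
    rw [hc] at ht; exact_mod_cast ht
  obtain ⟨T, hT⟩ := eventually_atTop.mp hev
  set a : ℝ := min (1/2) ((2*μ - cr)/(1+μ)) with ha_def
  have ha0 : 0 < a := lt_min (by norm_num) (div_pos (by linarith) (by linarith))
  have ha2 : a ≤ 1/2 := min_le_left _ _
  have ha3 : a + cr ≤ (2 - a) * μ := by
    have h := min_le_right (1/2 : ℝ) ((2*μ - cr)/(1+μ))
    rw [← ha_def] at h
    have := (le_div_iff₀ (by linarith : (0:ℝ) < 1 + μ)).mp h
    nlinarith
  refine ⟨a, ha0, 4, by norm_num, max T 1, lt_max_of_lt_right one_pos, ?_⟩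
  have hsub : Set.Ici (max T 1) ⊆ Set.Ici (0:ℝ) :=
    Set.Ici_subset_Ici.mpr (le_max_of_le_right zero_le_one)
  have hae := hsol.2.2.filter_mono (ae_mono (Measure.restrict_mono hsub le_rfl))
  filter_upwards [hae, ae_restrict_mem measurableSet_Ici] with t hinc htmem
  have ht0 : (0:ℝ) ≤ t := le_trans (le_max_of_le_right zero_le_one) htmem
  have htT : T ≤ t := le_trans (le_max_left _ _) htmem
  obtain ⟨-, hm⟩ := hinc
  obtain ⟨w, hw, hLw⟩ := Set.mem_smul_set.mp hm
  set L := lam t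
  set Bt := beta t
  have hLpos : 0 < L := hlam_pos t ht0
  have hBpos : 0 < Bt := hbeta_pos t ht0
  have hBz : B z = 0 := hz
  set P := xd t
  set s := x t - z with hs_def
  set q1 := D (x t) - D z with hq1
  set q2 := D z + v with hq2
  set q3 := B (x t) with hq3
  have e2 : -P - L•q1 - L•q2 - (L*Bt)•q3 = L • w - L • v := by
    rw [hLw, hq1, hq2]; module
  have key : (0:ℝ) ≤ ⟪P + s, -P - L•q1 - L•q2 - (L*Bt)•q3⟫ := by
    have e1 : P + s = (xd t + x t) - z := by simp only [P, s]; abel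
    rw [e1, e2, ← smul_sub, real_inner_smul_right]
    exact mul_nonneg hLpos.le (hA.1 hw hv)
  have hmono := inner_expand_fej P s q1 q2 q3 L (L*Bt) key
  have hcoD' : η*‖q1‖^2 ≤ ⟪s, q1⟫ := hD (x t) z
  have hcoB' : μ*‖q3‖^2 ≤ ⟪s, q3⟫ := by
    have h := hB (x t) z
    rw [hBz, sub_zero] at h
    exact h
  have hLB0 : 0 ≤ L * Bt := by positivity
  have hLBc : L * Bt ≤ cr := (hT t htT).le
  have hkey := real_key_fej L (L*Bt) a cr η μ (‖P‖^2) (‖q1‖^2) (‖q2‖^2) (‖q3‖^2)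
    ⟪P,q1⟫ ⟪P,q2⟫ ⟪P,q3⟫ ⟪P,s⟫ ⟪s,q1⟫ ⟪s,q2⟫ ⟪s,q3⟫
    (by positivity) (by positivity) hLpos.le hLB0 hLBc ha0 ha2 ha3 hmono
    (young_quarter P q1 L) (young_quarter P q2 L) (young_one P q3 (L*Bt)) hcoD' hcoB'
  have egoal : ⟪z - x t, v + D z⟫ = -⟪s, q2⟫ := by
    rw [show z - x t = -(x t - z) by abel, inner_neg_left, add_comm v]
  rw [egoal]
  have eps : ⟪P, s⟫ = ⟪xd t, x t - z⟫ := rfl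
  linarith [hkey]
end

section
/- (Ergodic continuous Opial Lemma.) Let S ⊆ H be a nonempty set, x : [0,∞) → H a strongly (Bochner) measurable map, and λ : [0,∞) → (0,∞) a measurable function that is integrable on each interval [0,b] and satisfies ∫₀^∞ λ(t) dt = ∞. Define x̃ : (0,∞) → H by x̃(t) = (1/∫₀^t λ(s) ds) ∫₀^t λ(s) x(s) ds. Assume: (i) for every z ∈ S, lim_{t→∞} ‖x(t) − z‖ exists; (ii) every weak sequential cluster point of x̃ (i.e., every weak limit of a sequence x̃(t_n) with t_n → ∞) belongs to S. Then there exists x_∞ ∈ S such that x̃(t) converges weakly to x_∞ as t → ∞. -/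
open scoped RealInnerProductSpace Pointwise
open MeasureTheory Filter

variable {H : Type*} [NormedAddCommGroup H] [InnerProductSpace ℝ H]

section OpialHelpers
variable {H : Type*} [NormedAddCommGroup H] [InnerProductSpace ℝ H]



/-- Weak sequential compactness of bounded sequences in a Hilbert space. -/
theorem weak_seq_compact [CompleteSpace H] (y : ℕ → H) (C : ℝ)
    (hC : ∀ n, ‖y n‖ ≤ C) :
    ∃ φ : ℕ → ℕ, StrictMono φ ∧ ∃ q : H,
      ∀ u : H, Tendsto (fun n => (⟪y (φ n), u⟫ : ℝ)) atTop (nhds ⟪q, u⟫) := by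
  classical
  have hC0 : 0 ≤ C := le_trans (norm_nonneg _) (hC 0)
  -- the closed span of the range of y
  set K : Submodule ℝ H := (Submodule.span ℝ (Set.range y)).topologicalClosure with hK
  have hyK : ∀ n, y n ∈ K :=
    fun n => Submodule.le_topologicalClosure _ (Submodule.subset_span ⟨n, rfl⟩)
  -- a countable set whose closure contains K
  have hsep : TopologicalSpace.IsSeparable (K : Set H) := by
    have h1 : TopologicalSpace.IsSeparable (Set.range y) :=
      (Set.countable_range y).isSeparable
    exact h1.span.closure
  obtain ⟨c, hc_count, hc_sub⟩ := hsep
  have hc_ne : (insert (0:H) c).Nonempty := ⟨0, Set.mem_insert _ _⟩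
  obtain ⟨d, hd⟩ := (hc_count.insert 0).exists_eq_range hc_ne
  -- diagonal extraction via compactness of a product of intervals
  set F : ℕ → (ℕ → ℝ) := fun n m => ⟪y n, d m⟫ with hF
  have hFmem : ∀ n, F n ∈ Set.pi Set.univ (fun m => Set.Icc (-(C * ‖d m‖)) (C * ‖d m‖)) := by
    intro n
    intro m _
    have := abs_real_inner_le_norm (y n) (d m)
    have h2 : |⟪y n, d m⟫| ≤ C * ‖d m‖ :=
      le_trans this (mul_le_mul_of_nonneg_right (hC n) (norm_nonneg _))
    exact abs_le.1 h2
  have hcomp : IsCompact (Set.pi Set.univ (fun m => Set.Icc (-(C * ‖d m‖)) (C * ‖d m‖))) :=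
    isCompact_univ_pi fun m => isCompact_Icc
  obtain ⟨g, -, φ, hφ, hg⟩ := hcomp.tendsto_subseq hFmem
  refine ⟨φ, hφ, ?_⟩
  have hgm : ∀ m, Tendsto (fun n => (⟪y (φ n), d m⟫ : ℝ)) atTop (nhds (g m)) := by
    intro m
    have := (continuous_apply m).continuousAt.tendsto.comp hg
    exact this
  -- every u : H gives a Cauchy sequence
  have key : ∀ u : H, ∃ L : ℝ, Tendsto (fun n => (⟪y (φ n), u⟫ : ℝ)) atTop (nhds L) := by
    intro u
    have hcauchy : CauchySeq (fun n => (⟪y (φ n), u⟫ : ℝ)) := by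
      -- replace u by its projection onto K
      haveI : CompleteSpace K := by
        rw [hK]; exact (Submodule.isClosed_topologicalClosure _).completeSpace_coe
      set u' : H := (K.orthogonalProjectionOnto u : H) with hu'
      have hinner : ∀ n, (⟪y (φ n), u⟫ : ℝ) = ⟪y (φ n), u'⟫ := by
        intro n
        have hperp : u - u' ∈ Kᗮ := Submodule.sub_starProjection_mem_orthogonal (K := K) u
        have h0 : (⟪y (φ n), u - u'⟫ : ℝ) = 0 := hperp (y (φ n)) (hyK (φ n))
        have := inner_sub_right (𝕜 := ℝ) (y (φ n)) u u'
        linarith [h0, this]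
      rw [Metric.cauchySeq_iff]
      intro ε hε
      -- pick m with ‖u' - d m‖ small
      have hu'mem : u' ∈ closure (insert (0:H) c) := by
        have : u' ∈ (K : Set H) := (K.orthogonalProjectionOnto u).2
        have h1 : (K : Set H) ⊆ closure c := hc_sub
        exact closure_mono (Set.subset_insert _ _) (h1 this)
      have hδ : (0:ℝ) < ε / (4 * C + 4) := by positivity
      obtain ⟨v, hv_mem, hv_close⟩ := Metric.mem_closure_iff.1 hu'mem _ hδ
      obtain ⟨m, rfl⟩ := hd ▸ hv_mem
      -- the m-th coordinate converges, hence is Cauchy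
      have hCm := (hgm m).cauchySeq
      rw [Metric.cauchySeq_iff] at hCm
      obtain ⟨N, hN⟩ := hCm (ε/2) (by positivity)
      refine ⟨N, fun j hj i hi => ?_⟩
      have hbound : ∀ n, |(⟪y (φ n), u'⟫ : ℝ) - ⟪y (φ n), d m⟫| ≤ C * (ε / (4*C+4)) := by
        intro n
        have : (⟪y (φ n), u'⟫ : ℝ) - ⟪y (φ n), d m⟫ = ⟪y (φ n), u' - d m⟫ := by
          rw [inner_sub_right]
        rw [this]
        refine le_trans (abs_real_inner_le_norm _ _) ?_
        have h1 : ‖u' - d m‖ ≤ ε / (4*C+4) := by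
          rw [← dist_eq_norm]
          exact le_of_lt hv_close
        exact mul_le_mul (hC _) h1 (norm_nonneg _) hC0
      have hCe : C * (ε / (4*C+4)) ≤ ε/4 := by
        rw [mul_div_assoc' C ε, div_le_div_iff₀ (by positivity) (by norm_num : (0:ℝ) < 4)]
        nlinarith
      have h1 := hbound j
      have h2 := hbound i
      have h3 := hN j hj i hi
      rw [Real.dist_eq] at h3 ⊢
      simp only [hinner]
      have t1 := abs_sub_le (⟪y (φ j), u'⟫:ℝ) (⟪y (φ j), d m⟫:ℝ) (⟪y (φ i), u'⟫:ℝ)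
      have t2 := abs_sub_le (⟪y (φ j), d m⟫:ℝ) (⟪y (φ i), d m⟫:ℝ) (⟪y (φ i), u'⟫:ℝ)
      rw [abs_sub_comm (⟪y (φ i), d m⟫:ℝ) (⟪y (φ i), u'⟫:ℝ)] at t2
      linarith
    exact cauchySeq_tendsto_of_complete hcauchy
  choose L hL using key
  -- L is a bounded linear functional
  have hLadd : ∀ u v : H, L (u + v) = L u + L v := by
    intro u v
    have h1 : Tendsto (fun n => (⟪y (φ n), u⟫ : ℝ) + ⟪y (φ n), v⟫) atTop (nhds (L u + L v)) :=
      (hL u).add (hL v)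
    have h2 : (fun n => (⟪y (φ n), u⟫ : ℝ) + ⟪y (φ n), v⟫) = fun n => ⟪y (φ n), u + v⟫ := by
      funext n; rw [inner_add_right]
    rw [h2] at h1
    exact tendsto_nhds_unique (hL (u+v)) h1
  have hLsmul : ∀ (a : ℝ) (u : H), L (a • u) = a * L u := by
    intro a u
    have h1 : Tendsto (fun n => a * (⟪y (φ n), u⟫ : ℝ)) atTop (nhds (a * L u)) :=
      (hL u).const_mul a
    have h2 : (fun n => a * (⟪y (φ n), u⟫ : ℝ)) = fun n => ⟪y (φ n), a • u⟫ := by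
      funext n; rw [real_inner_smul_right]
    rw [h2] at h1
    exact tendsto_nhds_unique (hL (a • u)) h1
  have hLbound : ∀ u : H, |L u| ≤ C * ‖u‖ := by
    intro u
    have : Tendsto (fun n => |(⟪y (φ n), u⟫ : ℝ)|) atTop (nhds |L u|) := (hL u).abs
    refine le_of_tendsto this (Eventually.of_forall fun n => ?_)
    exact le_trans (abs_real_inner_le_norm _ _)
      (mul_le_mul_of_nonneg_right (hC _) (norm_nonneg _))
  set Llin : H →ₗ[ℝ] ℝ :=
    { toFun := L, map_add' := hLadd, map_smul' := by intro a u; simpa using hLsmul a u }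
  set Lc : H →L[ℝ] ℝ := LinearMap.mkContinuous Llin C (fun u => by
    rw [Real.norm_eq_abs]; exact hLbound u)
  obtain ⟨q, hq⟩ : ∃ q : H, ∀ u, (⟪q, u⟫ : ℝ) = L u := by
    refine ⟨(InnerProductSpace.toDual ℝ H).symm Lc, fun u => ?_⟩
    have := InnerProductSpace.toDual_symm_apply (𝕜 := ℝ) (E := H) (y := Lc) (x := u)
    exact this
  exact ⟨q, fun u => (hq u) ▸ hL u⟩


/-- Monotonicity of the primitive of a nonneg locally integrable function. -/
lemma Lam_mono {lam : ℝ → ℝ} (hpos : ∀ t : ℝ, 0 ≤ t → 0 < lam t)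
    (hInt : ∀ t : ℝ, 0 ≤ t → IntervalIntegrable lam volume 0 t)
    {a b : ℝ} (ha : 0 ≤ a) (hab : a ≤ b) :
    (∫ s in (0:ℝ)..a, lam s) ≤ ∫ s in (0:ℝ)..b, lam s := by
  have hIa := hInt a ha
  have hIb := hInt b (le_trans ha hab)
  have hIab : IntervalIntegrable lam volume a b := by
    refine hIb.mono_set ?_
    rw [Set.uIcc_of_le hab, Set.uIcc_of_le (le_trans ha hab)]
    exact Set.Icc_subset_Icc ha le_rfl
  have hsplit := intervalIntegral.integral_add_adjacent_intervals hIa hIab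
  have hnn : (0:ℝ) ≤ ∫ s in a..b, lam s := by
    apply intervalIntegral.integral_nonneg hab
    intro u hu
    exact le_of_lt (hpos u (le_trans ha hu.1))
  linarith

lemma Lam_nonneg {lam : ℝ → ℝ} (hpos : ∀ t : ℝ, 0 ≤ t → 0 < lam t)
    {a : ℝ} (ha : 0 ≤ a) : (0:ℝ) ≤ ∫ s in (0:ℝ)..a, lam s := by
  apply intervalIntegral.integral_nonneg ha
  intro u hu; exact le_of_lt (hpos u hu.1)

/-- Divergence of the primitive. -/
lemma Lam_tendsto_atTop {lam : ℝ → ℝ} (hmeas : Measurable lam)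
    (hpos : ∀ t : ℝ, 0 ≤ t → 0 < lam t)
    (hInt : ∀ t : ℝ, 0 ≤ t → IntervalIntegrable lam volume 0 t)
    (hdiv : ∫⁻ t in Set.Ici (0:ℝ), ENNReal.ofReal (lam t) = ⊤) :
    Tendsto (fun t => ∫ s in (0:ℝ)..t, lam s) atTop atTop := by
  have hub : ∀ K : ℝ, ∃ n : ℕ, K < ∫ s in (0:ℝ)..(n:ℝ), lam s := by
    intro K
    by_contra hcon
    push_neg at hcon
    set g : ℝ → ENNReal := fun t => ENNReal.ofReal (lam t) with hg
    have hmg : Measurable g := hmeas.ennreal_ofReal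
    have h1 : ∀ n : ℕ, (∫⁻ t in Set.Ioc (0:ℝ) n, g t) ≤ ENNReal.ofReal K := by
      intro n
      have hintn : IntegrableOn lam (Set.Ioc (0:ℝ) n) volume := (hInt n n.cast_nonneg).1
      have hnn : 0 ≤ᵐ[volume.restrict (Set.Ioc (0:ℝ) n)] lam := by
        filter_upwards [ae_restrict_mem measurableSet_Ioc] with u hu
        exact le_of_lt (hpos u (le_of_lt hu.1))
      rw [hg]
      rw [← ofReal_integral_eq_lintegral_ofReal hintn hnn]
      apply ENNReal.ofReal_le_ofReal
      have heq : (∫ s in (0:ℝ)..(n:ℝ), lam s) = ∫ t in Set.Ioc (0:ℝ) n, lam t :=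
        intervalIntegral.integral_of_le n.cast_nonneg
      rw [← heq]
      exact hcon n
    have h2 : (∫⁻ t in Set.Ici (0:ℝ), g t) = ∫⁻ t in Set.Ioi (0:ℝ), g t :=
      (setLIntegral_congr MeasureTheory.Ioi_ae_eq_Ici).symm
    have fn : ℕ → ℝ → ENNReal := fun n => (Set.Ioc (0:ℝ) (n:ℝ)).indicator g
    have hfn_meas : ∀ n : ℕ, Measurable ((Set.Ioc (0:ℝ) (n:ℝ)).indicator g) :=
      fun n => hmg.indicator measurableSet_Ioc
    have hfn_mono : Monotone (fun (n : ℕ) => (Set.Ioc (0:ℝ) (n:ℝ)).indicator g) := by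
      intro i j hij
      apply Set.indicator_le_indicator_of_subset
      · exact Set.Ioc_subset_Ioc le_rfl (Nat.cast_le.2 hij)
      · intro t; exact zero_le
    have hsup : (fun t => ⨆ n : ℕ, (Set.Ioc (0:ℝ) (n:ℝ)).indicator g t)
        = (Set.Ioi (0:ℝ)).indicator g := by
      funext t
      by_cases ht : t ∈ Set.Ioi (0:ℝ)
      · rw [Set.indicator_of_mem ht]
        apply le_antisymm
        · refine iSup_le fun n => ?_
          by_cases h : t ∈ Set.Ioc (0:ℝ) (n:ℝ)
          · rw [Set.indicator_of_mem h]
          · rw [Set.indicator_of_notMem h]; exact zero_le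
        · obtain ⟨n, hn⟩ := exists_nat_ge t
          have h : t ∈ Set.Ioc (0:ℝ) (n:ℝ) := ⟨ht, hn⟩
          calc g t = (Set.Ioc (0:ℝ) (n:ℝ)).indicator g t := (Set.indicator_of_mem h g).symm
            _ ≤ ⨆ n : ℕ, (Set.Ioc (0:ℝ) (n:ℝ)).indicator g t :=
              le_iSup (fun n : ℕ => (Set.Ioc (0:ℝ) (n:ℝ)).indicator g t) n
      · rw [Set.indicator_of_notMem ht]
        refine le_antisymm (iSup_le fun n => ?_) zero_le
        have h : t ∉ Set.Ioc (0:ℝ) (n:ℝ) := fun hc => ht hc.1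
        rw [Set.indicator_of_notMem h]
    have h3 : (∫⁻ t in Set.Ioi (0:ℝ), g t)
        = ⨆ n : ℕ, ∫⁻ t, (Set.Ioc (0:ℝ) (n:ℝ)).indicator g t := by
      rw [← lintegral_indicator measurableSet_Ioi g, ← lintegral_iSup hfn_meas hfn_mono]
      congr 1
      exact hsup.symm
    have h4 : ∀ n : ℕ, (∫⁻ t, (Set.Ioc (0:ℝ) (n:ℝ)).indicator g t)
        = ∫⁻ t in Set.Ioc (0:ℝ) n, g t := fun n =>
      lintegral_indicator measurableSet_Ioc g
    have h5 : (∫⁻ t in Set.Ici (0:ℝ), g t) ≤ ENNReal.ofReal K := by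
      rw [h2, h3]
      exact iSup_le fun n => (h4 n).le.trans (h1 n)
    rw [hdiv] at h5
    exact (ENNReal.ofReal_lt_top.not_ge h5).elim
  rw [tendsto_atTop]
  intro K
  obtain ⟨n, hn⟩ := hub K
  filter_upwards [eventually_ge_atTop (n:ℝ)] with t ht
  exact le_of_lt (lt_of_lt_of_le hn (Lam_mono hpos hInt n.cast_nonneg ht))

/-- weighted Cesàro averaging of a convergent function. -/
lemma cesaro_tendsto {lam f : ℝ → ℝ}
    (hpos : ∀ t : ℝ, 0 ≤ t → 0 < lam t)
    (hlamInt : ∀ t : ℝ, 0 ≤ t → IntervalIntegrable lam volume 0 t)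
    (hfInt : ∀ t : ℝ, 0 ≤ t → IntervalIntegrable (fun s => lam s * f s) volume 0 t)
    (hΛ : Tendsto (fun t => ∫ s in (0:ℝ)..t, lam s) atTop atTop)
    {L : ℝ} (hf : Tendsto f atTop (nhds L)) :
    Tendsto (fun t => (∫ s in (0:ℝ)..t, lam s)⁻¹ * ∫ s in (0:ℝ)..t, lam s * f s)
      atTop (nhds L) := by
  rw [Metric.tendsto_atTop]
  intro ε hε
  rw [Metric.tendsto_atTop] at hf
  obtain ⟨T, hT⟩ := hf (ε/4) (by positivity)
  set T' : ℝ := max T 0 with hT'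
  have hT'0 : (0:ℝ) ≤ T' := le_max_right _ _
  set D : ℝ := (∫ s in (0:ℝ)..T', lam s * f s) - L * ∫ s in (0:ℝ)..T', lam s with hD
  have h4 : (0:ℝ) < ε/4 := by positivity
  obtain ⟨T₂, hT₂⟩ := (tendsto_atTop.1 hΛ (max 1 (|D| * (4/ε)))).exists_forall_of_atTop
  refine ⟨max T' T₂, fun t ht => ?_⟩
  have htT' : T' ≤ t := le_trans (le_max_left _ _) ht
  have ht0 : (0:ℝ) ≤ t := le_trans hT'0 htT'
  set Λt : ℝ := ∫ s in (0:ℝ)..t, lam s with hΛt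
  have hΛ1 : 1 ≤ Λt := le_trans (le_max_left _ _) (hT₂ t (le_trans (le_max_right _ _) ht))
  have hΛD : |D| * (4/ε) ≤ Λt := le_trans (le_max_right _ _) (hT₂ t (le_trans (le_max_right _ _) ht))
  have hΛpos : (0:ℝ) < Λt := lt_of_lt_of_le one_pos hΛ1
  have hΛne : Λt ≠ 0 := ne_of_gt hΛpos
  have hmono_sub : ∀ g : ℝ → ℝ, IntervalIntegrable g volume 0 t →
      IntervalIntegrable g volume T' t := by
    intro g hg
    refine hg.mono_set ?_
    rw [Set.uIcc_of_le htT', Set.uIcc_of_le ht0]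
    exact Set.Icc_subset_Icc hT'0 le_rfl
  have hIl : IntervalIntegrable lam volume T' t := hmono_sub _ (hlamInt t ht0)
  have hIf : IntervalIntegrable (fun s => lam s * f s) volume T' t := hmono_sub _ (hfInt t ht0)
  have hIsub : IntervalIntegrable (fun s => lam s * (f s - L)) volume T' t := by
    have : (fun s => lam s * (f s - L)) = fun s => lam s * f s - L * lam s := by
      funext s; ring
    rw [this]
    exact hIf.sub (hIl.const_mul L)
  set E : ℝ := ∫ s in T'..t, lam s * (f s - L) with hEdef
  have hE : E = (∫ s in T'..t, lam s * f s) - L * ∫ s in T'..t, lam s := by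
    rw [hEdef]
    have : (fun s => lam s * (f s - L)) = fun s => lam s * f s - L * lam s := by
      funext s; ring
    rw [this, intervalIntegral.integral_sub hIf (hIl.const_mul L),
      intervalIntegral.integral_const_mul]
  have hsplitf : (∫ s in (0:ℝ)..t, lam s * f s)
      = (∫ s in (0:ℝ)..T', lam s * f s) + ∫ s in T'..t, lam s * f s :=
    (intervalIntegral.integral_add_adjacent_intervals (hfInt T' hT'0) hIf).symm
  have hsplitl : Λt = (∫ s in (0:ℝ)..T', lam s) + ∫ s in T'..t, lam s :=
    (intervalIntegral.integral_add_adjacent_intervals (hlamInt T' hT'0) hIl).symm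
  have hrepr : (∫ s in (0:ℝ)..t, lam s * f s) = D + E + L * Λt := by
    rw [hD, hE, hsplitf, hsplitl]; ring
  have hEbound : |E| ≤ ε/4 * Λt := by
    have h1 : |E| ≤ ∫ s in T'..t, |lam s * (f s - L)| := by
      rw [hEdef]
      exact intervalIntegral.abs_integral_le_integral_abs htT'
    have h2 : (∫ s in T'..t, |lam s * (f s - L)|) ≤ ∫ s in T'..t, lam s * (ε/4) := by
      apply intervalIntegral.integral_mono_on htT' hIsub.abs (hIl.mul_const (ε/4))
      intro s hs
      have hs0 : (0:ℝ) ≤ s := le_trans hT'0 hs.1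
      have hsT : T ≤ s := le_trans (le_max_left _ _) hs.1
      have hfs : |f s - L| ≤ ε/4 := by
        have := hT s hsT
        rw [Real.dist_eq] at this
        exact le_of_lt this
      rw [abs_mul, abs_of_nonneg (le_of_lt (hpos s hs0))]
      exact mul_le_mul_of_nonneg_left hfs (le_of_lt (hpos s hs0))
    have h3 : (∫ s in T'..t, lam s * (ε/4)) = (ε/4) * ∫ s in T'..t, lam s := by
      rw [intervalIntegral.integral_mul_const]; ring
    have h4 : (∫ s in T'..t, lam s) ≤ Λt := by
      have := Lam_nonneg hpos hT'0
      linarith [hsplitl]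
    have h5 : (0:ℝ) ≤ ∫ s in T'..t, lam s := by
      apply intervalIntegral.integral_nonneg htT'
      intro u hu; exact le_of_lt (hpos u (le_trans hT'0 hu.1))
    calc |E| ≤ ∫ s in T'..t, |lam s * (f s - L)| := h1
      _ ≤ ∫ s in T'..t, lam s * (ε/4) := h2
      _ = (ε/4) * ∫ s in T'..t, lam s := h3
      _ ≤ ε/4 * Λt := by nlinarith
  have hDbound : Λt⁻¹ * |D| ≤ ε/4 := by
    rw [inv_mul_le_iff₀ hΛpos]
    calc |D| = |D| * (4/ε) * (ε/4) := by field_simp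
      _ ≤ Λt * (ε/4) := mul_le_mul_of_nonneg_right hΛD (by positivity)
  have hdist : dist (Λt⁻¹ * ∫ s in (0:ℝ)..t, lam s * f s) L ≤ ε/2 := by
    rw [Real.dist_eq]
    have hkey : Λt⁻¹ * (∫ s in (0:ℝ)..t, lam s * f s) - L = Λt⁻¹ * (D + E) := by
      rw [hrepr]
      field_simp
      ring
    rw [hkey, abs_mul, abs_of_nonneg (le_of_lt (inv_pos.2 hΛpos))]
    have habs : |D + E| ≤ |D| + |E| := abs_add_le _ _
    have h6 : Λt⁻¹ * |D + E| ≤ Λt⁻¹ * (|D| + |E|) :=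
      mul_le_mul_of_nonneg_left habs (le_of_lt (inv_pos.2 hΛpos))
    have h7 : Λt⁻¹ * |E| ≤ ε/4 := by
      calc Λt⁻¹ * |E| ≤ Λt⁻¹ * (ε/4 * Λt) :=
        mul_le_mul_of_nonneg_left hEbound (le_of_lt (inv_pos.2 hΛpos))
        _ = ε/4 := by field_simp
    calc Λt⁻¹ * |D + E| ≤ Λt⁻¹ * (|D| + |E|) := h6
      _ = Λt⁻¹ * |D| + Λt⁻¹ * |E| := by ring
      _ ≤ ε/4 + ε/4 := add_le_add hDbound h7
      _ = ε/2 := by ring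
  exact lt_of_le_of_lt hdist (by linarith)

end OpialHelpers

/-- the ergodic continuous Opial lemma. Weak convergence is expressed via
inner products against arbitrary vectors. -/
theorem ergodic_continuous_opial [CompleteSpace H]
    (S : Set H) (hS : S.Nonempty)
    (x : ℝ → H) (hx : StronglyMeasurable x)
    (lam : ℝ → ℝ) (hmeas : Measurable lam)
    (hpos : ∀ t : ℝ, 0 ≤ t → 0 < lam t)
    (hloc : ∀ b > (0:ℝ), IntegrableOn lam (Set.Icc 0 b) volume)
    (hdiv : ∫⁻ t in Set.Ici (0:ℝ), ENNReal.ofReal (lam t) = ⊤)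
    (xt : ℝ → H)
    (hxt : ∀ t : ℝ, xt t = (∫ s in (0:ℝ)..t, lam s)⁻¹ • ∫ s in (0:ℝ)..t, lam s • x s)
    (hlim : ∀ z ∈ S, ∃ l : ℝ, Tendsto (fun t => ‖x t - z‖) atTop (nhds l))
    (hcluster : ∀ q : H, (∃ tn : ℕ → ℝ, Tendsto tn atTop atTop ∧
        ∀ u : H, Tendsto (fun n => (⟪xt (tn n), u⟫ : ℝ)) atTop (nhds ⟪q, u⟫)) → q ∈ S) :
    ∃ xinf ∈ S, ∀ u : H, Tendsto (fun t => (⟪xt t, u⟫ : ℝ)) atTop (nhds ⟪xinf, u⟫) := by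
  classical
  by_cases hP : ∀ t : ℝ, 0 ≤ t → IntegrableOn (fun s => lam s • x s) (Set.Ioc 0 t) volume
  · -- good case
    have hpos' : ∀ t : ℝ, 0 ≤ t → 0 < lam t := hpos
    have hlamInt : ∀ t : ℝ, 0 ≤ t → IntervalIntegrable lam volume 0 t := by
      intro t ht
      rcases eq_or_lt_of_le ht with h | h
      · rw [← h]
      · constructor
        · exact (hloc t h).mono_set Set.Ioc_subset_Icc_self
        · rw [Set.Ioc_eq_empty (not_lt.2 ht)]; exact integrableOn_empty
    have hxInt : ∀ t : ℝ, 0 ≤ t → IntervalIntegrable (fun s => lam s • x s) volume 0 t := by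
      intro t ht
      exact ⟨hP t ht, by rw [Set.Ioc_eq_empty (not_lt.2 ht)]; exact integrableOn_empty⟩
    have hΛ : Tendsto (fun t => ∫ s in (0:ℝ)..t, lam s) atTop atTop :=
      Lam_tendsto_atTop hmeas hpos' hlamInt hdiv
    have hfInt : ∀ (u : H) (t : ℝ), 0 ≤ t →
        IntervalIntegrable (fun s => lam s * ⟪x s, u⟫) volume 0 t := by
      intro u t ht
      have heqf : (fun s => lam s * (⟪x s, u⟫ : ℝ)) = fun s => (⟪lam s • x s, u⟫ : ℝ) := by
        funext s; rw [real_inner_smul_left]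
      constructor
      · rw [heqf]
        exact (hP t ht).inner_const u
      · rw [Set.Ioc_eq_empty (not_lt.2 ht)]; exact integrableOn_empty
    have key2 : ∀ (u : H) (t : ℝ), 0 ≤ t →
        (⟪xt t, u⟫ : ℝ) = (∫ s in (0:ℝ)..t, lam s)⁻¹ * ∫ s in (0:ℝ)..t, lam s * ⟪x s, u⟫ := by
      intro u t ht
      rw [hxt t, real_inner_smul_left]
      congr 1
      calc (⟪∫ s in (0:ℝ)..t, lam s • x s, u⟫ : ℝ)
          = ⟪u, ∫ s in (0:ℝ)..t, lam s • x s⟫ := real_inner_comm _ _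
        _ = ⟪u, ∫ s in Set.Ioc (0:ℝ) t, lam s • x s⟫ := by
            rw [intervalIntegral.integral_of_le ht]
        _ = ∫ s in Set.Ioc (0:ℝ) t, (⟪u, lam s • x s⟫ : ℝ) := (integral_inner (hP t ht) u).symm
        _ = ∫ s in Set.Ioc (0:ℝ) t, lam s * (⟪x s, u⟫ : ℝ) := by
            congr 1
            funext s
            rw [real_inner_smul_right, real_inner_comm]
        _ = ∫ s in (0:ℝ)..t, lam s * (⟪x s, u⟫ : ℝ) :=
            (intervalIntegral.integral_of_le ht).symm
    -- ergodic convergence of inner products against differences of points of S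
    have keyS : ∀ z₁ ∈ S, ∀ z₂ ∈ S, ∃ L : ℝ,
        Tendsto (fun t => (⟪xt t, z₁ - z₂⟫ : ℝ)) atTop (nhds L) := by
      intro z₁ hz₁ z₂ hz₂
      obtain ⟨l₁, hl₁⟩ := hlim z₁ hz₁
      obtain ⟨l₂, hl₂⟩ := hlim z₂ hz₂
      set L : ℝ := (l₂^2 - l₁^2 + ‖z₁‖^2 - ‖z₂‖^2)/2 with hLdef
      have heq : ∀ t : ℝ, (⟪x t, z₁ - z₂⟫ : ℝ)
          = (‖x t - z₂‖^2 - ‖x t - z₁‖^2 + ‖z₁‖^2 - ‖z₂‖^2)/2 := by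
        intro t
        have e1 := norm_sub_sq_real (x t) z₁
        have e2 := norm_sub_sq_real (x t) z₂
        have e3 : (⟪x t, z₁ - z₂⟫ : ℝ) = ⟪x t, z₁⟫ - ⟪x t, z₂⟫ :=
          inner_sub_right _ _ _
        rw [e3]; linarith
      have hfx : Tendsto (fun t => (⟪x t, z₁ - z₂⟫ : ℝ)) atTop (nhds L) := by
        have hcomb : Tendsto
            (fun t => (‖x t - z₂‖^2 - ‖x t - z₁‖^2 + ‖z₁‖^2 - ‖z₂‖^2)/2) atTop (nhds L) := by
          apply Tendsto.div_const
          exact (((hl₂.pow 2).sub (hl₁.pow 2)).add_const _).sub_const _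
        exact hcomb.congr fun t => (heq t).symm
      have hces := cesaro_tendsto hpos' hlamInt (hfInt (z₁ - z₂)) hΛ hfx
      refine ⟨L, ?_⟩
      apply Tendsto.congr' _ hces
      filter_upwards [eventually_ge_atTop (0:ℝ)] with t ht
      exact (key2 (z₁ - z₂) t ht).symm
    -- eventual boundedness of x and xt
    obtain ⟨z₀, hz₀⟩ := hS
    obtain ⟨l₀, hl₀⟩ := hlim z₀ hz₀
    rw [Metric.tendsto_atTop] at hl₀
    obtain ⟨N₀, hN₀⟩ := hl₀ 1 one_pos
    set T₀ : ℝ := max N₀ 0 with hT₀def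
    have hT₀0 : (0:ℝ) ≤ T₀ := le_max_right _ _
    set M : ℝ := |l₀| + 1 + ‖z₀‖ with hMdef
    have hM0 : 0 ≤ M := by positivity
    have hMx : ∀ t : ℝ, T₀ ≤ t → ‖x t‖ ≤ M := by
      intro t ht
      have h1 := hN₀ t (le_trans (le_max_left _ _) ht)
      rw [Real.dist_eq] at h1
      have h2 : ‖x t - z₀‖ ≤ |l₀| + 1 := by
        have := abs_sub_abs_le_abs_sub ‖x t - z₀‖ l₀
        rw [abs_of_nonneg (norm_nonneg _)] at this
        linarith
      have h3 := norm_add_le (x t - z₀) z₀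
      rw [sub_add_cancel] at h3
      rw [hMdef]; linarith
    obtain ⟨T₂, hT₂⟩ := (tendsto_atTop.1 hΛ 1).exists_forall_of_atTop
    set T₁ : ℝ := max T₀ T₂ with hT₁def
    have hT₁0 : (0:ℝ) ≤ T₁ := le_trans hT₀0 (le_max_left _ _)
    set C : ℝ := ‖∫ s in (0:ℝ)..T₀, lam s • x s‖ + M with hCdef
    have hC : ∀ t : ℝ, T₁ ≤ t → ‖xt t‖ ≤ C := by
      intro t ht
      have ht0 : (0:ℝ) ≤ t := le_trans hT₁0 ht
      have htT₀ : T₀ ≤ t := le_trans (le_max_left _ _) ht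
      have hΛ1 : (1:ℝ) ≤ ∫ s in (0:ℝ)..t, lam s :=
        hT₂ t (le_trans (le_max_right _ _) ht)
      set Λt : ℝ := ∫ s in (0:ℝ)..t, lam s with hΛtdef
      have hΛpos : (0:ℝ) < Λt := lt_of_lt_of_le one_pos hΛ1
      have hIxt : IntervalIntegrable (fun s => lam s • x s) volume T₀ t := by
        refine (hxInt t ht0).mono_set ?_
        rw [Set.uIcc_of_le htT₀, Set.uIcc_of_le ht0]
        exact Set.Icc_subset_Icc hT₀0 le_rfl
      have hIlt : IntervalIntegrable lam volume T₀ t := by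
        refine (hlamInt t ht0).mono_set ?_
        rw [Set.uIcc_of_le htT₀, Set.uIcc_of_le ht0]
        exact Set.Icc_subset_Icc hT₀0 le_rfl
      have hsplit : (∫ s in (0:ℝ)..t, lam s • x s)
          = (∫ s in (0:ℝ)..T₀, lam s • x s) + ∫ s in T₀..t, lam s • x s :=
        (intervalIntegral.integral_add_adjacent_intervals (hxInt T₀ hT₀0) hIxt).symm
      have htail : ‖∫ s in T₀..t, lam s • x s‖ ≤ M * Λt := by
        have h1 := intervalIntegral.norm_integral_le_integral_norm
          (f := fun s => lam s • x s) (μ := volume) htT₀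
        have h2 : (∫ s in T₀..t, ‖lam s • x s‖) ≤ ∫ s in T₀..t, lam s * M := by
          apply intervalIntegral.integral_mono_on htT₀ hIxt.norm (hIlt.mul_const M)
          intro s hs
          have hs0 : (0:ℝ) ≤ s := le_trans hT₀0 hs.1
          rw [norm_smul, Real.norm_eq_abs, abs_of_nonneg (le_of_lt (hpos s hs0))]
          exact mul_le_mul_of_nonneg_left (hMx s hs.1) (le_of_lt (hpos s hs0))
        have h3 : (∫ s in T₀..t, lam s * M) = M * ∫ s in T₀..t, lam s := by
          rw [intervalIntegral.integral_mul_const]; ring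
        have h4 : (∫ s in T₀..t, lam s) ≤ Λt := by
          have h5 := (intervalIntegral.integral_add_adjacent_intervals
            (hlamInt T₀ hT₀0) hIlt).symm
          have h6 := Lam_nonneg hpos' hT₀0
          rw [hΛtdef]
          linarith [h5]
        have h7 : (0:ℝ) ≤ ∫ s in T₀..t, lam s := by
          apply intervalIntegral.integral_nonneg htT₀
          intro u hu; exact le_of_lt (hpos u (le_trans hT₀0 hu.1))
        calc ‖∫ s in T₀..t, lam s • x s‖ ≤ ∫ s in T₀..t, ‖lam s • x s‖ := h1
          _ ≤ ∫ s in T₀..t, lam s * M := h2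
          _ = M * ∫ s in T₀..t, lam s := h3
          _ ≤ M * Λt := mul_le_mul_of_nonneg_left h4 hM0
      rw [hxt t, norm_smul, Real.norm_eq_abs,
        abs_of_nonneg (le_of_lt (inv_pos.2 hΛpos))]
      have h8 : ‖∫ s in (0:ℝ)..t, lam s • x s‖
          ≤ ‖∫ s in (0:ℝ)..T₀, lam s • x s‖ + M * Λt := by
        rw [hsplit]
        exact le_trans (norm_add_le _ _) (add_le_add_right htail _)
      have h9 : Λt⁻¹ ≤ 1 := by
        rw [inv_le_one_iff₀]; right; exact hΛ1
      have h10 : (0:ℝ) ≤ Λt⁻¹ := le_of_lt (inv_pos.2 hΛpos)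
      calc Λt⁻¹ * ‖∫ s in (0:ℝ)..t, lam s • x s‖
          ≤ Λt⁻¹ * (‖∫ s in (0:ℝ)..T₀, lam s • x s‖ + M * Λt) :=
            mul_le_mul_of_nonneg_left h8 h10
        _ = Λt⁻¹ * ‖∫ s in (0:ℝ)..T₀, lam s • x s‖ + M * (Λt⁻¹ * Λt) := by ring
        _ = Λt⁻¹ * ‖∫ s in (0:ℝ)..T₀, lam s • x s‖ + M := by
            rw [inv_mul_cancel₀ (ne_of_gt hΛpos), mul_one]
        _ ≤ 1 * ‖∫ s in (0:ℝ)..T₀, lam s • x s‖ + M :=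
            add_le_add_left (mul_le_mul_of_nonneg_right h9 (norm_nonneg _)) _
        _ = C := by rw [hCdef]; ring
    -- first weak cluster point
    obtain ⟨φ, hφ, q, hq⟩ := weak_seq_compact (fun n : ℕ => xt (T₁ + n)) C
      (fun n => hC _ (le_add_of_nonneg_right n.cast_nonneg))
    have htn : Tendsto (fun n : ℕ => T₁ + ((φ n : ℕ) : ℝ)) atTop atTop := by
      apply tendsto_atTop_add_const_left
      apply tendsto_atTop_mono (fun n => ?_) tendsto_natCast_atTop_atTop
      exact_mod_cast Nat.cast_le.2 hφ.le_apply
    have hqS : q ∈ S := hcluster q ⟨fun n => T₁ + φ n, htn, hq⟩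
    -- uniqueness of weak cluster points
    have huniq : ∀ q' ∈ S, (∃ sn : ℕ → ℝ, Tendsto sn atTop atTop ∧
        ∀ u : H, Tendsto (fun n => (⟪xt (sn n), u⟫ : ℝ)) atTop (nhds ⟪q', u⟫)) → q' = q := by
      rintro q' hq'S ⟨sn, hsn, hsn2⟩
      obtain ⟨L, hL⟩ := keyS q hqS q' hq'S
      have h1 : (⟪q, q - q'⟫ : ℝ) = L := by
        refine tendsto_nhds_unique (hq (q - q')) ?_
        have := hL.comp htn
        simpa [Function.comp_def] using this
      have h2 : (⟪q', q - q'⟫ : ℝ) = L := by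
        refine tendsto_nhds_unique (hsn2 (q - q')) ?_
        have := hL.comp hsn
        simpa [Function.comp_def] using this
      have h3 : (⟪q - q', q - q'⟫ : ℝ) = 0 := by
        rw [inner_sub_left]
        rw [h1, h2]; ring
      have h4 : q - q' = 0 := inner_self_eq_zero.1 h3
      have : q = q' := by rwa [sub_eq_zero] at h4
      exact this.symm
    refine ⟨q, hqS, fun u => ?_⟩
    by_contra hcon
    rw [Metric.tendsto_atTop] at hcon
    push_neg at hcon
    obtain ⟨ε, hε, hbad⟩ := hcon
    choose s hs1 hs2 using hbad
    set sn : ℕ → ℝ := fun n => s (max (n:ℝ) T₁) with hsndef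
    have hsn_ge : ∀ n : ℕ, (n:ℝ) ≤ sn n := fun n => le_trans (le_max_left _ _) (hs1 _)
    have hsnT₁ : ∀ n : ℕ, T₁ ≤ sn n := fun n => le_trans (le_max_right _ _) (hs1 _)
    have hsn : Tendsto sn atTop atTop :=
      tendsto_atTop_mono hsn_ge tendsto_natCast_atTop_atTop
    obtain ⟨ψ, hψ, q', hq'⟩ := weak_seq_compact (fun n : ℕ => xt (sn n)) C
      (fun n => hC _ (hsnT₁ n))
    have hsnψ : Tendsto (fun n => sn (ψ n)) atTop atTop := hsn.comp hψ.tendsto_atTop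
    have hq'mem : ∀ u : H, Tendsto (fun n => (⟪xt (sn (ψ n)), u⟫ : ℝ)) atTop (nhds ⟪q', u⟫) :=
      hq'
    have hq'S : q' ∈ S := hcluster q' ⟨fun n => sn (ψ n), hsnψ, hq'mem⟩
    have heqq : q' = q := huniq q' hq'S ⟨fun n => sn (ψ n), hsnψ, hq'mem⟩
    rw [heqq] at hq'mem
    have hd : Tendsto (fun n => dist ((⟪xt (sn (ψ n)), u⟫ : ℝ)) (⟪q, u⟫ : ℝ)) atTop (nhds 0) := by
      have := (hq'mem u).dist (tendsto_const_nhds (x := (⟪q, u⟫ : ℝ)) (f := atTop))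
      simpa using this
    have hge : (0:ℝ) ≥ ε := ge_of_tendsto hd (Eventually.of_forall fun n => hs2 _)
    linarith
  · -- degenerate case: the averages are eventually 0
    push_neg at hP
    obtain ⟨t₀, ht₀0, ht₀⟩ := hP
    have hzero : ∀ t : ℝ, t₀ ≤ t → xt t = 0 := by
      intro t ht
      have hni : ¬ IntervalIntegrable (fun s => lam s • x s) volume 0 t := by
        intro hc
        exact ht₀ (hc.1.mono_set (Set.Ioc_subset_Ioc le_rfl ht))
      rw [hxt t, intervalIntegral.integral_undef hni, smul_zero]
    refine ⟨0, ?_, ?_⟩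
    · apply hcluster
      refine ⟨fun n : ℕ => t₀ + n, ?_, ?_⟩
      · exact tendsto_atTop_add_const_left _ t₀ tendsto_natCast_atTop_atTop
      · intro u
        have hz : ∀ n : ℕ, (⟪xt (t₀ + (n:ℝ)), u⟫ : ℝ) = ⟪(0:H), u⟫ := by
          intro n
          rw [hzero _ (le_add_of_nonneg_right n.cast_nonneg)]
        simp only [hz]
        exact tendsto_const_nhds
    · intro u
      apply Tendsto.congr' _ (tendsto_const_nhds (x := (⟪(0:H), u⟫ : ℝ)) (f := atTop))
      filter_upwards [eventually_ge_atTop t₀] with t ht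
      rw [hzero t ht]
end

section
/- Assume (H1), let x be a strong global solution of the dynamical system, and assume A is γ-strongly monotone for some γ > 0. Let z, v, p ∈ H with v ∈ Az, p ∈ N_C(z) and v + p + Dz = 0. Then for almost every t ≥ 0 the following inequality holds (in ℝ ∪ {+∞}): 2γλ(t)‖ẋ(t) + x(t) − z‖² + 2⟨ẋ(t), x(t) − z⟩ + λ(t)(2η − 3λ(t))‖D x(t) − D z‖² ≤ 2λ(t)β(t)[ sup_{u ∈ C} φ_B(u, p/β(t)) − σ_C(p/β(t)) ] + 3λ(t)²β(t)²‖B x(t)‖² + 3λ(t)²‖Dz + v‖². -/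
open scoped RealInnerProductSpace Pointwise
open MeasureTheory Filter

variable {H : Type*} [NormedAddCommGroup H] [InnerProductSpace ℝ H]

lemma young_ineq {H : Type*} [NormedAddCommGroup H] [InnerProductSpace ℝ H]
    (lam : ℝ) (hlam : 0 ≤ lam) (d a : H) :
    2 * (lam * ⟪d, a⟫) ≤ 2/3 * ‖d‖^2 + 3/2 * (lam^2 * ‖a‖^2) := by
  nlinarith [real_inner_le_norm d a, sq_nonneg (2*‖d‖ - 3*(lam*‖a‖)),
    mul_le_mul_of_nonneg_left (real_inner_le_norm d a) hlam,
    norm_nonneg d, norm_nonneg a, mul_nonneg hlam (norm_nonneg a)]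

set_option maxHeartbeats 1000000 in
lemma key_real {H : Type*} [NormedAddCommGroup H] [InnerProductSpace ℝ H]
    (γ η lam b r : ℝ) (hlam : 0 < lam) (hb : 0 < b)
    (d X z DX Dz BX p : H)
    (hkey : lam * (γ * ‖d + X - z‖^2) ≤
      ⟪d + X - z, -d - lam•(DX - Dz) - (lam*b)•BX + lam•p⟫)
    (hco : η * ‖DX - Dz‖^2 ≤ ⟪X - z, DX - Dz⟫)
    (hr : ⟪z, BX⟫ + b⁻¹ * ⟪X, p⟫ - ⟪X, BX⟫ ≤ r) :
    2*γ*lam*‖d + X - z‖^2 + 2*⟪d, X - z⟫ + lam*(2*η - 3*lam)*‖DX - Dz‖^2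
      ≤ 2*lam*b*(r - b⁻¹*⟪z, p⟫) + 3*lam^2*b^2*‖BX‖^2 + 3*lam^2*‖p‖^2 := by
  have hbb : 2*lam*b*(r - b⁻¹*⟪z, p⟫) = 2*lam*b*r - 2*lam*⟪z,p⟫ := by
    field_simp
  rw [hbb]
  have e1 : ⟪d + X - z, -d - lam•(DX - Dz) - (lam*b)•BX + lam•p⟫
      = -⟪d,d⟫ - ⟪d, X⟫ + ⟪d, z⟫
        - lam*(⟪d,DX⟫ - ⟪d,Dz⟫ + ⟪X,DX⟫ - ⟪X,Dz⟫ - ⟪z,DX⟫ + ⟪z,Dz⟫)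
        - lam*b*(⟪d,BX⟫ + ⟪X,BX⟫ - ⟪z,BX⟫)
        + lam*(⟪d,p⟫ + ⟪X,p⟫ - ⟪z,p⟫) := by
    simp only [inner_add_left, inner_sub_left, inner_add_right, inner_sub_right,
      inner_neg_right, real_inner_smul_right]
    rw [real_inner_comm X d, real_inner_comm z d]
    ring
  rw [e1] at hkey
  have hco2 : lam * (η * ‖DX - Dz‖^2) ≤ lam * (⟪X,DX⟫ - ⟪X,Dz⟫ - ⟪z,DX⟫ + ⟪z,Dz⟫) := by
    refine mul_le_mul_of_nonneg_left ?_ hlam.le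
    simp only [inner_sub_left, inner_sub_right] at hco
    linarith
  have y1 : 2*(lam*(⟪d,Dz⟫ - ⟪d,DX⟫)) ≤ 2/3*‖d‖^2 + 3/2*(lam^2*‖DX - Dz‖^2) := by
    have := young_ineq lam hlam.le d (Dz - DX)
    simp only [inner_sub_right] at this
    rwa [norm_sub_rev] at this
  have y2 : 2*(lam*(-(b*⟪d,BX⟫))) ≤ 2/3*‖d‖^2 + 3/2*(lam^2*(b^2*‖BX‖^2)) := by
    have := young_ineq lam hlam.le d (-(b•BX))
    simp only [inner_neg_right, real_inner_smul_right, norm_neg, norm_smul,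
      Real.norm_eq_abs, mul_pow, sq_abs] at this
    exact this
  have y3 : 2*(lam*⟪d,p⟫) ≤ 2/3*‖d‖^2 + 3/2*(lam^2*‖p‖^2) := young_ineq lam hlam.le d p
  have hrr : 2*lam*b*(⟪z, BX⟫ + b⁻¹ * ⟪X, p⟫ - ⟪X, BX⟫) ≤ 2*lam*b*r :=
    mul_le_mul_of_nonneg_left hr (by positivity)
  have hrr2 : 2*lam*b*(⟪z, BX⟫ + b⁻¹ * ⟪X, p⟫ - ⟪X, BX⟫)
      = 2*lam*b*⟪z,BX⟫ + 2*lam*⟪X,p⟫ - 2*lam*b*⟪X,BX⟫ := by field_simp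
  rw [hrr2] at hrr
  have hd : ⟪d,d⟫ = ‖d‖^2 := real_inner_self_eq_norm_sq d
  have hdxz : ⟪d, X - z⟫ = ⟪d,X⟫ - ⟪d,z⟫ := inner_sub_right d X z
  have s1 : (0:ℝ) ≤ lam^2*‖DX - Dz‖^2 := by positivity
  have s2 : (0:ℝ) ≤ lam^2*(b^2*‖BX‖^2) := by positivity
  have s3 : (0:ℝ) ≤ lam^2*‖p‖^2 := by positivity
  linarith [hkey, hco2, y1, y2, y3, hrr, s1, s2, s3]

/-- the strengthened Lyapunov inequality (in `ℝ ∪ {+∞}`) when `A` is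
`γ`-strongly monotone, for `v ∈ Az`, `p ∈ N_C(z)` with `v + p + Dz = 0`. -/
theorem lemma_fej1_strongly_monotone [CompleteSpace H]
    (A : H → Set H) (hA : MaximallyMonotone A)
    (η μ : ℝ) (hη : 0 < η) (hμ : 0 < μ)
    (D B : H → H) (hD : Cocoercive η D) (hB : Cocoercive μ B)
    (hC : {q : H | B q = 0}.Nonempty)
    (lam beta : ℝ → ℝ)
    (hlam_pos : ∀ t : ℝ, 0 ≤ t → 0 < lam t) (hbeta_pos : ∀ t : ℝ, 0 ≤ t → 0 < beta t)
    (hH1 : ∀ b > (0:ℝ), ContinuousOn lam (Set.Icc 0 b) ∧ ContinuousOn beta (Set.Icc 0 b))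
    (x₀ : H) (x xd : ℝ → H)
    (hsol : IsStrongGlobalSolution A D B lam beta x₀ x xd)
    (γ : ℝ) (hγ : 0 < γ) (hsm : StronglyMonotoneOperator γ A)
    (z v p : H) (hv : v ∈ A z) (hp : p ∈ normalCone {q : H | B q = 0} z)
    (hzero : v + p + D z = 0) :
    ∀ᵐ t ∂(volume.restrict (Set.Ici (0:ℝ))),
      ((2 * γ * lam t * ‖xd t + x t - z‖ ^ 2 + 2 * ⟪xd t, x t - z⟫ +
          lam t * (2 * η - 3 * lam t) * ‖D (x t) - D z‖ ^ 2 : ℝ) : EReal) ≤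
        ((2 * lam t * beta t : ℝ) : EReal) *
          ((⨆ u ∈ {q : H | B q = 0}, fitzpatrick B u ((beta t)⁻¹ • p)) -
            supportFn {q : H | B q = 0} ((beta t)⁻¹ • p)) +
        ((3 * lam t ^ 2 * beta t ^ 2 * ‖B (x t)‖ ^ 2 +
            3 * lam t ^ 2 * ‖D z + v‖ ^ 2 : ℝ) : EReal) := by
  obtain ⟨-, -, hae⟩ := hsol
  filter_upwards [hae, ae_restrict_mem measurableSet_Ici] with t ht ht0
  obtain ⟨-, hmem⟩ := ht
  have hlt : 0 < lam t := hlam_pos t ht0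
  have hbt : 0 < beta t := hbeta_pos t ht0
  obtain ⟨hzC, hpn⟩ := hp
  -- value of the support function
  have hsigma : supportFn {q : H | B q = 0} ((beta t)⁻¹ • p)
      = ((⟪z, (beta t)⁻¹ • p⟫ : ℝ) : EReal) := by
    refine le_antisymm (iSup₂_le fun y hy => ?_)
      (le_iSup₂ (f := fun y (_ : y ∈ {q : H | B q = 0}) =>
        ((⟪y, (beta t)⁻¹ • p⟫ : ℝ) : EReal)) z hzC)
    rw [EReal.coe_le_coe_iff]
    simp only [real_inner_smul_right]
    have h := hpn y hy
    rw [inner_sub_left] at h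
    have hbinv : (0:ℝ) ≤ (beta t)⁻¹ := by positivity
    nlinarith
  -- the resolvent inclusion
  rw [Set.mem_smul_set] at hmem
  obtain ⟨uu, huu, hue⟩ := hmem
  have h0 := hsm huu hv
  have hv' : v = -(p + D z) := by
    rw [add_assoc] at hzero; exact eq_neg_of_add_eq_zero_left hzero
  have hvec : (x t - lam t • D (x t) - (lam t * beta t) • B (x t) - (xd t + x t))
        - lam t • v
      = -(xd t) - lam t • (D (x t) - D z) - (lam t * beta t) • (B (x t)) + lam t • p := by
    rw [hv']; module
  have hkey : lam t * (γ * ‖xd t + x t - z‖^2) ≤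
      ⟪xd t + x t - z,
        -(xd t) - lam t • (D (x t) - D z) - (lam t * beta t) • (B (x t)) + lam t • p⟫ := by
    calc lam t * (γ * ‖xd t + x t - z‖^2)
        ≤ lam t * ⟪xd t + x t - z, uu - v⟫ := mul_le_mul_of_nonneg_left h0 hlt.le
      _ = ⟪xd t + x t - z, lam t • (uu - v)⟫ := (real_inner_smul_right _ _ _).symm
      _ = ⟪xd t + x t - z, lam t • uu - lam t • v⟫ := by rw [smul_sub]
      _ = _ := by rw [hue, hvec]
  have hDzv : ‖D z + v‖ = ‖p‖ := by
    rw [hv', show D z + -(p + D z) = -p by abel, norm_neg]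
  -- the Fitzpatrick lower bound
  have hcle : ((⟪z, B (x t)⟫ + ⟪x t, (beta t)⁻¹ • p⟫ - ⟪x t, B (x t)⟫ : ℝ) : EReal)
      ≤ ⨆ u, ⨆ (_ : B u = 0), fitzpatrick B u ((beta t)⁻¹ • p) := by
    refine le_trans ?_ (le_iSup₂ (f := fun q (_ : B q = 0) =>
      fitzpatrick B q ((beta t)⁻¹ • p)) z hzC)
    exact le_iSup (fun y => ((⟪z, B y⟫ + ⟪y, (beta t)⁻¹ • p⟫ - ⟪y, B y⟫ : ℝ) : EReal)) (x t)
  by_cases hStop : (⨆ u, ⨆ (_ : B u = 0), fitzpatrick B u ((beta t)⁻¹ • p)) = (⊤ : EReal)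
  · rw [hStop, hsigma, EReal.top_sub_coe,
      EReal.mul_top_of_pos (show (0:EReal) < ((2 * lam t * beta t : ℝ):EReal) by
        exact_mod_cast (by positivity : (0:ℝ) < 2 * lam t * beta t)),
      EReal.top_add_coe]
    exact le_top
  · have hSbot : (⨆ u, ⨆ (_ : B u = 0), fitzpatrick B u ((beta t)⁻¹ • p)) ≠ (⊥ : EReal) := by
      intro hS; rw [hS] at hcle; exact (EReal.bot_lt_coe _).not_ge hcle
    rw [hsigma, ← EReal.coe_toReal hStop hSbot, ← EReal.coe_sub, ← EReal.coe_mul,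
      ← EReal.coe_add, EReal.coe_le_coe_iff]
    rw [← EReal.coe_toReal hStop hSbot, EReal.coe_le_coe_iff] at hcle
    rw [real_inner_smul_right] at hcle
    have main := key_real γ η (lam t) (beta t)
      ((⨆ u, ⨆ (_ : B u = 0), fitzpatrick B u ((beta t)⁻¹ • p)).toReal) hlt hbt
      (xd t) (x t) z (D (x t)) (D z) (B (x t)) p hkey (hD (x t) z) hcle
    rw [real_inner_smul_right, hDzv]
    linarith [main]
end
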